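/- Let θ, φ : [0,1] → ℝ be continuously differentiable and suppose (a) φ(0) = 0; (b) φ(1)·θ(1) = 0; (c) φ'(u)·(θ·φ)'(v) ≥ −1 for all 0 < u ≤ v < 1; and (d) θ'(u) ≤ 0 for all u ∈ (0,1). Then the function C_{θ,φ}(u,v) = u·v + θ(max(u,v))·φ(u)·φ(v) is a copula on [0,1]², i.e. it satisfies (P1), (P2) and (P3). -/

import Mathlib

open Set MeasureTheory intervalIntegral

/-- A bivariate copula on `[0,1]²`, given as a function `ℝ → ℝ → ℝ`. -/
def IsCopula (C : ℝ → ℝ → ℝ) : Prop :=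
  (∀ u ∈ Set.Icc (0:ℝ) 1, C u 0 = 0 ∧ C 0 u = 0) ∧
  (∀ u ∈ Set.Icc (0:ℝ) 1, C u 1 = u ∧ C 1 u = u) ∧
  (∀ u₁ u₂ v₁ v₂ : ℝ, 0 ≤ u₁ → u₁ ≤ u₂ → u₂ ≤ 1 → 0 ≤ v₁ → v₁ ≤ v₂ → v₂ ≤ 1 →
    C u₂ v₂ - C u₂ v₁ - C u₁ v₂ + C u₁ v₁ ≥ 0)


private lemma intNonnegIoo {a b : ℝ} (hab : a ≤ b) {f : ℝ → ℝ}
    (h : ∀ x ∈ Set.Ioo a b, 0 ≤ f x) : 0 ≤ ∫ x in a..b, f x := by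
  apply intervalIntegral.integral_nonneg_of_ae_restrict hab
  rw [← MeasureTheory.Measure.restrict_congr_set MeasureTheory.Ioo_ae_eq_Icc]
  exact (ae_restrict_iff' measurableSet_Ioo).2 (Filter.Eventually.of_forall h)

private lemma derivAtIoo {f : ℝ → ℝ} (hf : ContDiffOn ℝ 1 f (Set.Icc 0 1))
    {x : ℝ} (hx : x ∈ Set.Ioo (0:ℝ) 1) :
    HasDerivAt f (derivWithin f (Set.Icc 0 1) x) x :=
  ((hf.differentiableOn one_ne_zero) x (Ioo_subset_Icc_self hx)).hasDerivWithinAt.hasDerivAt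
    (Icc_mem_nhds hx.1 hx.2)

private lemma intgIcc {f : ℝ → ℝ} (hf : ContDiffOn ℝ 1 f (Set.Icc 0 1))
    {a b : ℝ} (h0 : 0 ≤ a) (hab : a ≤ b) (hb : b ≤ 1) :
    IntervalIntegrable (derivWithin f (Set.Icc 0 1)) MeasureTheory.volume a b := by
  apply ContinuousOn.intervalIntegrable
  apply (hf.continuousOn_derivWithin (uniqueDiffOn_Icc one_pos) le_rfl).mono
  rw [uIcc_of_le hab]; exact Icc_subset_Icc h0 hb

private lemma ftcIcc {f : ℝ → ℝ} (hf : ContDiffOn ℝ 1 f (Set.Icc 0 1))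
    {a b : ℝ} (h0 : 0 ≤ a) (hab : a ≤ b) (hb : b ≤ 1) :
    ∫ t in a..b, derivWithin f (Set.Icc 0 1) t = f b - f a := by
  apply intervalIntegral.integral_eq_sub_of_hasDeriv_right_of_le hab
    (hf.continuousOn.mono (Icc_subset_Icc h0 hb))
  · intro t ht
    exact (derivAtIoo hf ⟨lt_of_le_of_lt h0 ht.1, lt_of_lt_of_le ht.2 hb⟩).hasDerivWithinAt
  · exact intgIcc hf h0 hab hb

/-- Off-diagonal rectangle inequality. -/
private lemma lemA (θ φ : ℝ → ℝ)
    (hθ : ContDiffOn ℝ 1 θ (Set.Icc 0 1))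
    (hφ : ContDiffOn ℝ 1 φ (Set.Icc 0 1))
    (hc : ∀ u v : ℝ, 0 < u → u ≤ v → v < 1 →
      derivWithin φ (Set.Icc 0 1) u *
        derivWithin (fun x => θ x * φ x) (Set.Icc 0 1) v ≥ -1)
    {a b c d : ℝ} (h0 : 0 ≤ a) (hab : a ≤ b) (hbc : b ≤ c) (hcd : c ≤ d) (hd1 : d ≤ 1) :
    0 ≤ (b - a) * (d - c) + (φ b - φ a) * ((θ d * φ d) - (θ c * φ c)) := by
  set ψ : ℝ → ℝ := fun x => θ x * φ x with hψdef
  have hψ : ContDiffOn ℝ 1 ψ (Set.Icc 0 1) := hθ.mul hφ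
  have h0c : (0:ℝ) ≤ c := h0.trans (hab.trans hbc)
  have hΔ : ψ d - ψ c = ∫ t in c..d, derivWithin ψ (Set.Icc 0 1) t :=
    (ftcIcc hψ h0c hcd hd1).symm
  set g : ℝ → ℝ := fun s => s * (d - c) + φ s * (ψ d - ψ c) with hg
  have hmono : MonotoneOn g (Set.Icc a b) := by
    apply monotoneOn_of_deriv_nonneg (convex_Icc a b)
    · exact (continuousOn_id.mul continuousOn_const).add
        ((hφ.continuousOn.mono (Icc_subset_Icc h0 (hbc.trans (hcd.trans hd1)))).mul
          continuousOn_const)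
    · rw [interior_Icc]
      intro s hs
      exact ((hasDerivAt_id s).mul_const _ |>.add
        ((derivAtIoo hφ ⟨lt_of_le_of_lt h0 hs.1,
          lt_of_lt_of_le hs.2 (hbc.trans (hcd.trans hd1))⟩).mul_const _)).differentiableAt.differentiableWithinAt
    · rw [interior_Icc]
      intro s hs
      have hs01 : s ∈ Set.Ioo (0:ℝ) 1 :=
        ⟨lt_of_le_of_lt h0 hs.1, lt_of_lt_of_le hs.2 (hbc.trans (hcd.trans hd1))⟩
      have hder : HasDerivAt g (1 * (d - c) + derivWithin φ (Set.Icc 0 1) s * (ψ d - ψ c)) s :=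
        ((hasDerivAt_id s).mul_const _).add ((derivAtIoo hφ hs01).mul_const _)
      rw [hder.deriv]
      have hval : 1 * (d - c) + derivWithin φ (Set.Icc 0 1) s * (ψ d - ψ c)
          = ∫ t in c..d, (1 + derivWithin φ (Set.Icc 0 1) s * derivWithin ψ (Set.Icc 0 1) t) := by
        rw [hΔ, intervalIntegral.integral_add intervalIntegrable_const
            ((intgIcc hψ h0c hcd hd1).const_mul _),
          intervalIntegral.integral_const_mul, intervalIntegral.integral_const]
        simp only [smul_eq_mul]; ring
      rw [hval]
      apply intNonnegIoo hcd
      intro t ht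
      have := hc s t hs01.1 (le_of_lt (lt_of_lt_of_le hs.2 (hbc.trans ht.1.le)))
        (lt_of_lt_of_le ht.2 hd1)
      linarith [this]
  have := hmono (left_mem_Icc.2 hab) (right_mem_Icc.2 hab) hab
  simp only [hg, hψdef] at this
  nlinarith [this]

/-- Diagonal square inequality. -/
private lemma lemC (θ φ : ℝ → ℝ)
    (hθ : ContDiffOn ℝ 1 θ (Set.Icc 0 1))
    (hφ : ContDiffOn ℝ 1 φ (Set.Icc 0 1))
    (hc : ∀ u v : ℝ, 0 < u → u ≤ v → v < 1 →
      derivWithin φ (Set.Icc 0 1) u *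
        derivWithin (fun x => θ x * φ x) (Set.Icc 0 1) v ≥ -1)
    (hd : ∀ u ∈ Set.Ioo (0:ℝ) 1, derivWithin θ (Set.Icc 0 1) u ≤ 0)
    {a b : ℝ} (h0 : 0 ≤ a) (hab : a ≤ b) (hb1 : b ≤ 1) :
    0 ≤ (b - a) ^ 2 + θ b * φ b * φ b - 2 * (θ b * φ a * φ b) + θ a * φ a * φ a := by
  set ψ : ℝ → ℝ := fun x => θ x * φ x with hψdef
  have hψ : ContDiffOn ℝ 1 ψ (Set.Icc 0 1) := hθ.mul hφ
  set G : ℝ → ℝ := fun t => (t - a) ^ 2 + ψ t * φ t - 2 * (ψ t * φ a) + ψ a * φ a with hG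
  have hmono : MonotoneOn G (Set.Icc a b) := by
    apply monotoneOn_of_deriv_nonneg (convex_Icc a b)
    · have hφc := hφ.continuousOn.mono (Icc_subset_Icc h0 hb1)
      have hψc := hψ.continuousOn.mono (Icc_subset_Icc h0 hb1)
      exact ((((continuousOn_id.sub continuousOn_const).pow 2).add
        (hψc.mul hφc)).sub ((continuousOn_const.mul (hψc.mul continuousOn_const)))).add
        continuousOn_const
    · rw [interior_Icc]
      intro t ht
      have ht01 : t ∈ Set.Ioo (0:ℝ) 1 := ⟨lt_of_le_of_lt h0 ht.1, lt_of_lt_of_le ht.2 hb1⟩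
      have h1 : HasDerivAt (fun t => (t - a) ^ 2) (2 * (t - a)) t := by
        simpa using ((hasDerivAt_id t).sub_const a).fun_pow 2
      exact (((h1.add ((derivAtIoo hψ ht01).mul (derivAtIoo hφ ht01))).sub
        (HasDerivAt.const_mul 2 ((derivAtIoo hψ ht01).mul_const (φ a)))).add
        (hasDerivAt_const t (ψ a * φ a))).differentiableAt.differentiableWithinAt
    · rw [interior_Icc]
      intro t ht
      have ht01 : t ∈ Set.Ioo (0:ℝ) 1 := ⟨lt_of_le_of_lt h0 ht.1, lt_of_lt_of_le ht.2 hb1⟩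
      set φ' := derivWithin φ (Set.Icc 0 1) with hφ'
      set ψ' := derivWithin ψ (Set.Icc 0 1) with hψ'
      set θ' := derivWithin θ (Set.Icc 0 1) with hθ'
      have h1 : HasDerivAt (fun t => (t - a) ^ 2) (2 * (t - a)) t := by
        simpa using ((hasDerivAt_id t).sub_const a).fun_pow 2
      have hder : HasDerivAt G
          (2 * (t - a) + (ψ' t * φ t + ψ t * φ' t) - 2 * (ψ' t * φ a) + 0) t := by
        exact ((h1.add ((derivAtIoo hψ ht01).mul (derivAtIoo hφ ht01))).sub
          (HasDerivAt.const_mul 2 ((derivAtIoo hψ ht01).mul_const (φ a)))).add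
          (hasDerivAt_const t (ψ a * φ a))
      rw [hder.deriv]
      -- product rule identity: ψ' t = θ' t * φ t + θ t * φ' t
      have hprod : ψ' t = θ' t * φ t + θ t * φ' t := by
        have h2 : HasDerivAt ψ (θ' t * φ t + θ t * φ' t) t :=
          (derivAtIoo hθ ht01).mul (derivAtIoo hφ ht01)
        exact (derivAtIoo hψ ht01).unique h2
      -- FTC for φ on [a,t]
      have hΔφ : φ t - φ a = ∫ s in a..t, φ' s := (ftcIcc hφ h0 ht.1.le (ht.2.le.trans hb1)).symm
      have key1 : 0 ≤ 2 * (t - a) + 2 * ((φ t - φ a) * ψ' t) := by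
        have hval : 2 * (t - a) + 2 * ((φ t - φ a) * ψ' t)
            = ∫ s in a..t, (2 * (1 + φ' s * ψ' t)) := by
          rw [hΔφ]
          rw [show (fun s => 2 * (1 + φ' s * ψ' t)) = (fun s => 2 + (fun s => 2 * ψ' t * φ' s) s)
            from by funext s; ring]
          rw [intervalIntegral.integral_add intervalIntegrable_const
            ((intgIcc hφ h0 ht.1.le (ht.2.le.trans hb1)).const_mul _),
            intervalIntegral.integral_const_mul, intervalIntegral.integral_const]
          simp only [smul_eq_mul]; ring
        rw [hval]
        apply intNonnegIoo ht.1.le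
        intro s hs
        have := hc s t (lt_of_le_of_lt h0 hs.1) hs.2.le ht01.2
        linarith [this]
      have key2 : 0 ≤ -(θ' t * φ t * φ t) := by
        have := hd t ht01
        nlinarith [sq_nonneg (φ t)]
      have e : 2 * (t - a) + (ψ' t * φ t + ψ t * φ' t) - 2 * (ψ' t * φ a) + 0
          = (2 * (t - a) + 2 * ((φ t - φ a) * ψ' t)) + (-(θ' t * φ t * φ t)) := by
        simp only [hprod, hψdef]
        ring
      rw [e]
      linarith [key1, key2]
  have hGa : G a = 0 := by
    show (a - a) ^ 2 + ψ a * φ a - 2 * (ψ a * φ a) + ψ a * φ a = 0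
    ring
  have hle := hmono (left_mem_Icc.2 hab) (right_mem_Icc.2 hab) hab
  rw [hGa] at hle
  have e2 : (b - a) ^ 2 + θ b * φ b * φ b - 2 * (θ b * φ a * φ b) + θ a * φ a * φ a = G b := by
    show _ = (b - a) ^ 2 + ψ b * φ b - 2 * (ψ b * φ a) + ψ a * φ a
    simp only [hψdef]
    ring
  rw [e2]
  exact hle

theorem stmt1 (θ φ : ℝ → ℝ)
    (hθ : ContDiffOn ℝ 1 θ (Set.Icc 0 1))
    (hφ : ContDiffOn ℝ 1 φ (Set.Icc 0 1))
    (ha : φ 0 = 0)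
    (hb : φ 1 * θ 1 = 0)
    (hc : ∀ u v : ℝ, 0 < u → u ≤ v → v < 1 →
      derivWithin φ (Set.Icc 0 1) u *
        derivWithin (fun x => θ x * φ x) (Set.Icc 0 1) v ≥ -1)
    (hd : ∀ u ∈ Set.Ioo (0:ℝ) 1, derivWithin θ (Set.Icc 0 1) u ≤ 0) :
    IsCopula (fun u v => u * v + θ (max u v) * φ u * φ v) := by
  set C : ℝ → ℝ → ℝ := fun u v => u * v + θ (max u v) * φ u * φ v with hC
  -- symmetry
  have hsymm : ∀ u v, C u v = C v u := by
    intro u v; simp only [hC]; rw [max_comm]; ring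
  -- off-diagonal rectangle (u-side below v-side)
  have offd : ∀ a b c d : ℝ, 0 ≤ a → a ≤ b → b ≤ c → c ≤ d → d ≤ 1 →
      0 ≤ C b d - C b c - C a d + C a c := by
    intro a b c d h0 h1 h2 h3 h4
    have e : C b d - C b c - C a d + C a c
        = (b - a) * (d - c) + (φ b - φ a) * ((θ d * φ d) - (θ c * φ c)) := by
      simp only [hC, max_eq_right (h2.trans h3), max_eq_right h2,
        max_eq_right (h1.trans (h2.trans h3)), max_eq_right (h1.trans h2)]
      ring
    rw [e]
    exact lemA θ φ hθ hφ hc h0 h1 h2 h3 h4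
  -- diagonal square
  have sqd : ∀ a b : ℝ, 0 ≤ a → a ≤ b → b ≤ 1 →
      0 ≤ C b b - C b a - C a b + C a a := by
    intro a b h0 h1 h2
    have e : C b b - C b a - C a b + C a a
        = (b - a) ^ 2 + θ b * φ b * φ b - 2 * (θ b * φ a * φ b) + θ a * φ a * φ a := by
      simp only [hC, max_self, max_eq_right h1, max_eq_left h1]
      ring
    rw [e]
    exact lemC θ φ hθ hφ hc hd h0 h1 h2
  -- general rectangle with a ≤ c
  have main : ∀ a b c d : ℝ, 0 ≤ a → a ≤ b → b ≤ 1 → 0 ≤ c → c ≤ d → d ≤ 1 → a ≤ c →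
      0 ≤ C b d - C b c - C a d + C a c := by
    intro a b c d h0a hab hb1 h0c hcd hd1 hac
    rcases le_total b c with h | h
    · exact offd a b c d h0a hab h hcd hd1
    · have split1 : C b d - C b c - C a d + C a c
          = (C c d - C c c - C a d + C a c) + (C b d - C b c - C c d + C c c) := by ring
      have p1 : 0 ≤ C c d - C c c - C a d + C a c :=
        offd a c c d h0a hac le_rfl hcd hd1
      have p2 : 0 ≤ C b d - C b c - C c d + C c c := by
        rcases le_total b d with h' | h'
        · have split2 : C b d - C b c - C c d + C c c
              = (C b b - C b c - C c b + C c c) + (C b d - C b b - C c d + C c b) := by ring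
          have q1 : 0 ≤ C b b - C b c - C c b + C c c := sqd c b h0c h hb1
          have q2 : 0 ≤ C b d - C b b - C c d + C c b :=
            offd c b b d h0c h le_rfl h' hd1
          linarith
        · have split2 : C b d - C b c - C c d + C c c
              = (C d d - C d c - C c d + C c c) + (C b d - C b c - C d d + C d c) := by ring
          have q1 : 0 ≤ C d d - C d c - C c d + C c c := sqd c d h0c hcd hd1
          have q2 : 0 ≤ C b d - C b c - C d d + C d c := by
            have := offd c d d b h0c hcd le_rfl h' hb1
            rw [hsymm d b, hsymm d d, hsymm c b, hsymm c d] at this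
            linarith
          linarith
      linarith
  refine ⟨?_, ?_, ?_⟩
  · intro u _; constructor <;> simp [hC, ha]
  · intro u hu
    constructor
    · show u * 1 + θ (max u 1) * φ u * φ 1 = u
      rw [max_eq_right hu.2]
      have : θ 1 * φ u * φ 1 = φ u * (φ 1 * θ 1) := by ring
      rw [this, hb]; ring
    · show 1 * u + θ (max 1 u) * φ 1 * φ u = u
      rw [max_eq_left hu.2]
      have : θ 1 * φ 1 * φ u = φ u * (φ 1 * θ 1) := by ring
      rw [this, hb]; ring
  · intro u₁ u₂ v₁ v₂ h0u hu12 hu21 h0v hv12 hv21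
    rcases le_total u₁ v₁ with h | h
    · exact main u₁ u₂ v₁ v₂ h0u hu12 hu21 h0v hv12 hv21 h
    · have := main v₁ v₂ u₁ u₂ h0v hv12 hv21 h0u hu12 hu21 h
      rw [hsymm v₂ u₂, hsymm v₂ u₁, hsymm v₁ u₂, hsymm v₁ u₁] at this
      show 0 ≤ C u₂ v₂ - C u₂ v₁ - C u₁ v₂ + C u₁ v₁
      linarith
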